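/- Let C ⊆ {0,1}^n be a code and i ∈ [n]. The canonical form of the neural ideal of the quotient code C/{i} consists exactly of those elements of the canonical form of J_C that are divisible by neither x_i nor (1−x_i). -/

import Mathlib

open MvPolynomial

/-- The pseudomonomial with data `(σ, τ)`. -/
noncomputable def psm {V : Type*} (σ τ : Finset V) : MvPolynomial V (ZMod 2) :=
  (∏ i ∈ σ, X i) * ∏ j ∈ τ, (1 - X j)

/-- A pseudomonomial: a product `∏_{i∈σ} x_i ∏_{j∈τ}(1 - x_j)` with `σ, τ` disjoint. -/
def IsPseudomonomial {V : Type*} (f : MvPolynomial V (ZMod 2)) : Prop :=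
  ∃ σ τ : Finset V, Disjoint σ τ ∧ f = psm σ τ

/-- `f` is a minimal pseudomonomial of `I` (an element of the canonical form of `I`). -/
def IsMinimalPseudomonomial {V : Type*} (I : Ideal (MvPolynomial V (ZMod 2)))
    (f : MvPolynomial V (ZMod 2)) : Prop :=
  IsPseudomonomial f ∧ f ∈ I ∧
    ∀ g : MvPolynomial V (ZMod 2), g ∣ f → ¬ f ∣ g → g ∉ I

/-- The indicator pseudomonomial of a word `c`. -/
noncomputable def indic {V : Type*} [Fintype V] (c : V → ZMod 2) :
    MvPolynomial V (ZMod 2) :=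
  ∏ i : V, (if c i = 1 then X i else 1 - X i)

/-- The neural ideal of a code `C`. -/
noncomputable def neuralIdeal {V : Type*} [Fintype V] (C : Set (V → ZMod 2)) :
    Ideal (MvPolynomial V (ZMod 2)) :=
  Ideal.span {f | ∃ c ∉ C, f = indic c}

set_option linter.unusedSectionVars false

section Aux
variable {V : Type*}

lemma zmod2_unit : ∀ z : ZMod 2, IsUnit z → z = 1 := by decide

lemma isUnit_fin_eq_one : ∀ {n : ℕ} (p : MvPolynomial (Fin n) (ZMod 2)), IsUnit p → p = 1 := by
  intro n
  induction n with
  | zero =>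
    intro p hp
    obtain ⟨c, rfl⟩ := C_surjective (Fin 0) p
    have hc : IsUnit c := by
      have := hp.map (constantCoeff (R := ZMod 2) (σ := Fin 0))
      simpa using this
    rw [zmod2_unit c hc]; simp
  | succ n ih =>
    intro p hp
    have hp' := hp.map (finSuccEquiv (ZMod 2) n)
    rw [Polynomial.isUnit_iff] at hp'
    obtain ⟨r, hr, hrp⟩ := hp'
    have h1 : (finSuccEquiv (ZMod 2) n) p = 1 := by rw [← hrp, ih r hr]; simp
    have h2 := congrArg (finSuccEquiv (ZMod 2) n).symm h1
    simpa using h2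

lemma isUnit_eq_one (p : MvPolynomial V (ZMod 2)) (hp : IsUnit p) : p = 1 := by
  obtain ⟨m, f, hf, q, rfl⟩ := exists_fin_rename p
  rcases Nat.eq_zero_or_pos m with hm | hm
  · subst hm
    obtain ⟨c, rfl⟩ := C_surjective (Fin 0) q
    rw [rename_C] at hp ⊢
    have hc : IsUnit c := by
      have := hp.map (constantCoeff (R := ZMod 2) (σ := V))
      simpa using this
    rw [zmod2_unit c hc]; simp
  · have : Nonempty (Fin m) := ⟨⟨0, hm⟩⟩
    set g := Function.invFun f with hg
    have hgf : Function.LeftInverse g f := Function.leftInverse_invFun hf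
    have hq : IsUnit q := by
      have := hp.map (rename (R := ZMod 2) g)
      rwa [rename_rename, show g ∘ f = id from funext hgf, rename_id] at this
    rw [isUnit_fin_eq_one q hq]; simp

lemma dvd_dvd_eq {a b : MvPolynomial V (ZMod 2)} (hab : a ∣ b) (hba : b ∣ a) : a = b := by
  obtain ⟨u, hu⟩ := (associated_of_dvd_dvd hab hba)
  rw [← hu, isUnit_eq_one (u : MvPolynomial V (ZMod 2)) u.isUnit, mul_one]

end Aux

lemma one_add_one_mv {V : Type*} : (1 + 1 : MvPolynomial V (ZMod 2)) = 0 := by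
  rw [← C_1, ← map_add]
  have : (1 + 1 : ZMod 2) = 0 := rfl
  rw [this, map_zero]

section Primes
variable {V : Type*} [DecidableEq V]

noncomputable def shiftFun (j : V) : V → MvPolynomial V (ZMod 2) :=
  fun k => if k = j then X k + 1 else X k

lemma prime_X_mv (j : V) : Prime (X j : MvPolynomial V (ZMod 2)) := by
  let e := (renameEquiv (ZMod 2) (Equiv.optionSubtypeNe j).symm).trans
    (optionEquivLeft (ZMod 2) {b : V // b ≠ j})
  have he : e (X j) = Polynomial.X := by
    simp [e, renameEquiv_apply, rename_X, Equiv.optionSubtypeNe_symm_self,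
      optionEquivLeft_X_none]
  have : Prime (e (X j)) := by rw [he]; exact Polynomial.prime_X
  exact (MulEquiv.prime_iff e.toMulEquiv).mp this

lemma shift_invol (j : V) (p : MvPolynomial V (ZMod 2)) :
    aeval (shiftFun j) (aeval (shiftFun j) p) = p := by
  have h : ((aeval (R := ZMod 2) (shiftFun j)).comp (aeval (shiftFun j))) p
      = (AlgHom.id (ZMod 2) (MvPolynomial V (ZMod 2))) p := by
    congr 1
    apply MvPolynomial.algHom_ext
    intro k
    by_cases hk : k = j
    · subst hk
      simp [shiftFun, add_assoc, one_add_one_mv]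
    · simp [shiftFun, hk]
  simpa using h

/-- The shift automorphism sending `X j ↦ X j + 1`. -/
noncomputable def shiftEquiv (j : V) : MvPolynomial V (ZMod 2) ≃ₐ[ZMod 2] MvPolynomial V (ZMod 2) :=
  AlgEquiv.ofAlgHom (aeval (shiftFun j)) (aeval (shiftFun j))
    (AlgHom.ext fun p => shift_invol j p) (AlgHom.ext fun p => shift_invol j p)

lemma prime_one_sub_X (j : V) : Prime (1 - X j : MvPolynomial V (ZMod 2)) := by
  have h : (shiftEquiv j) (X j) = 1 - X j := by
    have : (1 - X j : MvPolynomial V (ZMod 2)) = X j + 1 := by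
      rw [sub_eq_add_neg, add_comm]
      congr 1
      rw [neg_eq_iff_add_eq_zero, ← two_mul]
      have : (2 : MvPolynomial V (ZMod 2)) = 0 := by
        rw [show (2 : MvPolynomial V (ZMod 2)) = 1 + 1 by norm_num, one_add_one_mv]
      rw [this, zero_mul]
    rw [this]
    simp [shiftEquiv, shiftFun]
  have := (MulEquiv.prime_iff (shiftEquiv j).toMulEquiv).mpr (prime_X_mv j)
  rwa [show (shiftEquiv j).toMulEquiv (X j) = (shiftEquiv j) (X j) from rfl, h] at this
end Primes

section Psm
variable {V : Type*}

lemma eval_psm (c : V → ZMod 2) (σ τ : Finset V) :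
    eval c (psm σ τ) = (∏ a ∈ σ, c a) * ∏ b ∈ τ, (1 - c b) := by
  simp [psm, map_prod]

lemma eval_psm_one {c : V → ZMod 2} {σ τ : Finset V}
    (h1 : ∀ a ∈ σ, c a = 1) (h0 : ∀ b ∈ τ, c b = 0) : eval c (psm σ τ) = 1 := by
  rw [eval_psm]
  have e1 : (∏ a ∈ σ, c a) = 1 := Finset.prod_eq_one h1
  have e2 : (∏ b ∈ τ, (1 - c b)) = 1 := Finset.prod_eq_one (fun b hb => by rw [h0 b hb, sub_zero])
  rw [e1, e2, mul_one]

lemma psm_ne_zero {σ τ : Finset V} (hd : Disjoint σ τ) : psm σ τ ≠ 0 := by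
  classical
  intro h
  have := eval_psm_one (c := fun k => if k ∈ σ then (1 : ZMod 2) else 0) (σ := σ) (τ := τ)
    (fun a ha => by simp [ha]) (fun b hb => by
      have : b ∉ σ := Finset.disjoint_right.mp hd hb
      simp [this])
  rw [h, map_zero] at this
  exact zero_ne_one this

lemma psm_dvd_psm {σ' σ τ' τ : Finset V} (hσ : σ' ⊆ σ) (hτ : τ' ⊆ τ) :
    psm σ' τ' ∣ psm σ τ := by
  classical
  refine ⟨psm (σ \ σ') (τ \ τ'), ?_⟩
  rw [psm, psm, psm]
  rw [← Finset.prod_sdiff hσ, ← Finset.prod_sdiff hτ]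
  ring

lemma psm_insert_left [DecidableEq V] {a : V} {σ τ : Finset V} (ha : a ∉ σ) :
    psm (insert a σ) τ = X a * psm σ τ := by
  rw [psm, psm, Finset.prod_insert ha, mul_assoc]

lemma psm_insert_right [DecidableEq V] {b : V} {σ τ : Finset V} (hb : b ∉ τ) :
    psm σ (insert b τ) = (1 - X b) * psm σ τ := by
  rw [psm, psm, Finset.prod_insert hb]
  ring
end Psm

section T
variable {V : Type*}

lemma dvd_prime_mul {p m g : MvPolynomial V (ZMod 2)} (hp : Prime p) (h : g ∣ p * m) :
    ∃ g', g' ∣ m ∧ (g = g' ∨ g = p * g') := by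
  by_cases hpg : p ∣ g
  · obtain ⟨g', rfl⟩ := hpg
    have : g' ∣ m := (mul_dvd_mul_iff_left hp.ne_zero).mp h
    exact ⟨g', this, Or.inr rfl⟩
  · obtain ⟨q, hq⟩ := h
    have hpq : p ∣ g * q := ⟨m, by rw [← hq]⟩
    rcases hp.dvd_mul.mp hpq with h1 | h2
    · exact absurd h1 hpg
    · obtain ⟨q', rfl⟩ := h2
      have hm : m = g * q' := by
        have : p * m = p * (g * q') := by rw [hq]; ring
        exact mul_left_cancel₀ hp.ne_zero this
      exact ⟨g, ⟨q', hm⟩, Or.inl rfl⟩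
end T

section T
variable {V : Type*} [DecidableEq V]

lemma dvd_psm_right : ∀ (τ : Finset V) (g : MvPolynomial V (ZMod 2)),
    g ∣ psm ∅ τ → ∃ τ' ⊆ τ, g = psm ∅ τ' := by
  intro τ
  induction τ using Finset.induction_on with
  | empty =>
    intro g hg
    have : psm (∅ : Finset V) ∅ = 1 := by simp [psm]
    rw [this] at hg
    exact ⟨∅, Finset.Subset.refl _, by rw [isUnit_eq_one g (isUnit_of_dvd_one hg), this]⟩
  | @insert b τ hb ih =>
    intro g hg
    rw [psm_insert_right hb] at hg
    obtain ⟨g', hg', hcase⟩ := dvd_prime_mul (prime_one_sub_X b) hg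
    obtain ⟨τ', hτ', rfl⟩ := ih g' hg'
    rcases hcase with rfl | rfl
    · exact ⟨τ', hτ'.trans (Finset.subset_insert _ _), rfl⟩
    · have hbτ' : b ∉ τ' := fun hb' => hb (hτ' hb')
      exact ⟨insert b τ', Finset.insert_subset_insert _ hτ',
        (psm_insert_right hbτ').symm⟩

lemma dvd_psm_classify : ∀ (σ τ : Finset V) (g : MvPolynomial V (ZMod 2)),
    g ∣ psm σ τ → ∃ σ' τ', σ' ⊆ σ ∧ τ' ⊆ τ ∧ g = psm σ' τ' := by
  intro σ
  induction σ using Finset.induction_on with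
  | empty =>
    intro τ g hg
    obtain ⟨τ', hτ', rfl⟩ := dvd_psm_right τ g hg
    exact ⟨∅, τ', Finset.Subset.refl _, hτ', rfl⟩
  | @insert a σ ha ih =>
    intro τ g hg
    rw [psm_insert_left ha] at hg
    obtain ⟨g', hg', hcase⟩ := dvd_prime_mul (prime_X_mv a) hg
    obtain ⟨σ', τ', hσ', hτ', rfl⟩ := ih τ g' hg'
    rcases hcase with rfl | rfl
    · exact ⟨σ', τ', hσ'.trans (Finset.subset_insert _ _), hτ', rfl⟩
    · have haσ' : a ∉ σ' := fun ha' => ha (hσ' ha')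
      exact ⟨insert a σ', τ', Finset.insert_subset_insert _ hσ', hτ',
        (psm_insert_left haσ').symm⟩
end T

section NI
variable {V : Type*} [Fintype V] [DecidableEq V]

lemma zmod2_ne_one {z : ZMod 2} (h : z ≠ 1) : z = 0 := by revert z; decide
lemma zmod2_ne_zero {z : ZMod 2} (h : z ≠ 0) : z = 1 := by revert z; decide

lemma eval_eq_zero_of_mem {C : Set (V → ZMod 2)} {f : MvPolynomial V (ZMod 2)}
    (hf : f ∈ neuralIdeal C) {c : V → ZMod 2} (hc : c ∈ C) : eval c f = 0 := by
  have hle : neuralIdeal C ≤ RingHom.ker (eval c) := by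
    rw [neuralIdeal, Ideal.span_le]
    rintro _ ⟨c', hc', rfl⟩
    have hne : c ≠ c' := fun h => hc' (h ▸ hc)
    obtain ⟨k, hk⟩ : ∃ k, c k ≠ c' k := by
      by_contra h
      push_neg at h
      exact hne (funext h)
    have : eval c (indic c') = 0 := by
      rw [indic, map_prod]
      apply Finset.prod_eq_zero (Finset.mem_univ k)
      by_cases h1 : c' k = 1
      · rw [if_pos h1, eval_X]
        rw [h1] at hk
        exact zmod2_ne_one hk
      · rw [if_neg h1]
        have hc'k : c' k = 0 := zmod2_ne_one h1
        rw [hc'k] at hk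
        have : c k = 1 := zmod2_ne_zero hk
        simp [this]
    exact this
  exact hle hf

lemma psm_mem_neuralIdeal {C : Set (V → ZMod 2)} {σ τ : Finset V} (hd : Disjoint σ τ)
    (hv : ∀ c ∈ C, eval c (psm σ τ) = 0) : psm σ τ ∈ neuralIdeal C := by
  set R := (σ ∪ τ)ᶜ with hR
  have key : psm σ τ = ∑ T ∈ R.powerset, psm (σ ∪ T) (τ ∪ (R \ T)) := by
    have h1 : (1 : MvPolynomial V (ZMod 2)) = ∏ k ∈ R, (X k + (1 - X k)) :=
      (Finset.prod_eq_one (fun k _ => by ring)).symm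
    calc psm σ τ = psm σ τ * ∏ k ∈ R, (X k + (1 - X k)) := by rw [← h1, mul_one]
      _ = psm σ τ * ∑ T ∈ R.powerset, (∏ k ∈ T, X k) * ∏ k ∈ R \ T, (1 - X k) := by
          rw [Finset.prod_add]
      _ = ∑ T ∈ R.powerset, psm (σ ∪ T) (τ ∪ (R \ T)) := by
          rw [Finset.mul_sum]
          apply Finset.sum_congr rfl
          intro T hT
          rw [Finset.mem_powerset] at hT
          have hσT : Disjoint σ T := Finset.disjoint_left.mpr fun a ha hat =>
            (by simpa [hR] using hT hat : a ∉ σ ∪ τ) (Finset.mem_union_left _ ha)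
          have hτR : Disjoint τ (R \ T) := Finset.disjoint_left.mpr fun b hb hbr =>
            (by simpa [hR] using (Finset.mem_sdiff.mp hbr).1 : b ∉ σ ∪ τ)
              (Finset.mem_union_right _ hb)
          rw [psm, psm, Finset.prod_union hσT, Finset.prod_union hτR]
          ring
  rw [key]
  apply Ideal.sum_mem
  intro T hT
  rw [Finset.mem_powerset] at hT
  set σ' := σ ∪ T with hσ'
  set τ' := τ ∪ (R \ T) with hτ'
  have hστ' : Disjoint σ' τ' := by
    rw [Finset.disjoint_left]
    intro a ha ha'
    rcases Finset.mem_union.mp ha with h | h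
    · rcases Finset.mem_union.mp ha' with h' | h'
      · exact Finset.disjoint_left.mp hd h h'
      · exact (by simpa [hR] using (Finset.mem_sdiff.mp h').1 : a ∉ σ ∪ τ)
          (Finset.mem_union_left _ h)
    · rcases Finset.mem_union.mp ha' with h' | h'
      · exact (by simpa [hR] using hT h : a ∉ σ ∪ τ) (Finset.mem_union_right _ h')
      · exact (Finset.mem_sdiff.mp h').2 h
  have huniv : σ' ∪ τ' = Finset.univ := by
    apply Finset.eq_univ_of_forall
    intro k
    by_cases hk : k ∈ σ ∪ τ
    · rcases Finset.mem_union.mp hk with h | h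
      · exact Finset.mem_union_left _ (Finset.mem_union_left _ h)
      · exact Finset.mem_union_right _ (Finset.mem_union_left _ h)
    · by_cases hkT : k ∈ T
      · exact Finset.mem_union_left _ (Finset.mem_union_right _ hkT)
      · refine Finset.mem_union_right _ (Finset.mem_union_right _ ?_)
        exact Finset.mem_sdiff.mpr ⟨by simpa [hR] using hk, hkT⟩
  set c : V → ZMod 2 := fun k => if k ∈ σ' then 1 else 0 with hc
  have hindic : indic c = psm σ' τ' := by
    rw [indic, ← huniv, Finset.prod_union hστ', psm]
    congr 1
    · apply Finset.prod_congr rfl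
      intro a ha
      have : c a = 1 := by simp [hc, ha]
      rw [if_pos this]
    · apply Finset.prod_congr rfl
      intro b hb
      have hb' : b ∉ σ' := Finset.disjoint_right.mp hστ' hb
      have : c b = 0 := by simp [hc, hb']
      rw [this, if_neg (by decide)]
  have hcC : c ∉ C := by
    intro hcC
    have h1 : eval c (psm σ τ) = 1 := eval_psm_one
      (fun a ha => by
        have haσ' : a ∈ σ' := Finset.mem_union_left _ ha
        simp [hc, haσ'])
      (fun b hb => by
        have : b ∉ σ' := Finset.disjoint_right.mp hστ' (Finset.mem_union_left _ hb)
        simp [hc, this])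
    rw [hv c hcC] at h1
    exact zero_ne_one h1
  have : psm σ' τ' ∈ {f : MvPolynomial V (ZMod 2) | ∃ c ∉ C, f = indic c} :=
    ⟨c, hcC, hindic.symm⟩
  exact Ideal.subset_span this
end NI

section Main

lemma rename_psm {V W : Type*} [DecidableEq W] {f : V → W} (hf : Function.Injective f)
    (σ τ : Finset V) : rename f (psm σ τ) = psm (σ.image f) (τ.image f) := by
  rw [psm, psm, map_mul, map_prod, map_prod]
  congr 1
  · rw [Finset.prod_image (fun x _ y _ h => hf h)]
    simp [rename_X]
  · rw [Finset.prod_image (fun x _ y _ h => hf h)]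
    simp [rename_X]

/-- substituting `z` for `X i` fixes `psm σ τ` when `i` appears in neither set. -/
lemma subst_psm {n : ℕ} (i : Fin n) (z : MvPolynomial (Fin n) (ZMod 2)) {σ τ : Finset (Fin n)}
    (hσ : i ∉ σ) (hτ : i ∉ τ) :
    aeval (fun k => if k = i then z else X k) (psm σ τ) = psm σ τ := by
  rw [psm, map_mul, map_prod, map_prod]
  congr 1
  · apply Finset.prod_congr rfl
    intro a ha
    rw [aeval_X, if_neg (show ¬ a = i from fun h => hσ (by rw [← h]; exact ha))]
  · apply Finset.prod_congr rfl
    intro b hb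
    rw [map_sub, map_one, aeval_X, if_neg (show ¬ b = i from fun h => hτ (by rw [← h]; exact hb))]

/-- The canonical form of the neural ideal of the quotient code `C/{i}` consists
exactly of the elements of the canonical form of `J_C` divisible by neither `x_i`
nor `1 - x_i`. -/
theorem canonicalForm_quotient_code {n : ℕ} (C : Set (Fin n → ZMod 2)) (i : Fin n) :
    (rename (Subtype.val : {j : Fin n // j ≠ i} → Fin n)) ''
        {g | IsMinimalPseudomonomial
          (neuralIdeal ((fun (c : Fin n → ZMod 2) (j : {j : Fin n // j ≠ i}) => c j.1) '' C))
          g} =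
      {f | IsMinimalPseudomonomial (neuralIdeal C) f ∧
        ¬ (X i ∣ f) ∧ ¬ ((1 - X i) ∣ f)} := by
  classical
  set W := {j : Fin n // j ≠ i}
  set val : W → Fin n := Subtype.val
  have hval : Function.Injective val := Subtype.val_injective
  set D : Set (W → ZMod 2) := (fun (c : Fin n → ZMod 2) (j : W) => c j.1) '' C with hD
  have hDmem : ∀ c ∈ C, (c ∘ val) ∈ D := fun c hc => ⟨c, hc, rfl⟩
  have himg : ∀ {s : Finset (Fin n)}, (∀ x ∈ s, x ≠ i) →
      (s.subtype (· ≠ i)).image val = s := by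
    intro s hs
    have h2 := Finset.subtype_map_of_mem (p := (· ≠ i)) hs
    rw [Finset.map_eq_image] at h2
    exact h2
  ext f
  simp only [Set.mem_image, Set.mem_setOf_eq]
  constructor
  · rintro ⟨g, ⟨⟨σ₀, τ₀, hd₀, rfl⟩, hgI, hgmin⟩, rfl⟩
    set σ : Finset (Fin n) := σ₀.image val with hσdef
    set τ : Finset (Fin n) := τ₀.image val with hτdef
    have hrn : rename val (psm σ₀ τ₀) = psm σ τ := rename_psm hval σ₀ τ₀
    have hd : Disjoint σ τ := (Finset.disjoint_image hval).mpr hd₀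
    have hiσ : i ∉ σ := by
      intro h
      obtain ⟨a, _, ha⟩ := Finset.mem_image.mp h
      exact a.2 ha
    have hiτ : i ∉ τ := by
      intro h
      obtain ⟨a, _, ha⟩ := Finset.mem_image.mp h
      exact a.2 ha
    have hfI : psm σ τ ∈ neuralIdeal C := by
      apply psm_mem_neuralIdeal hd
      intro c hc
      rw [← hrn, eval_rename]
      exact eval_eq_zero_of_mem hgI (hDmem c hc)
    rw [hrn]
    refine ⟨⟨⟨σ, τ, hd, rfl⟩, hfI, ?_⟩, ?_, ?_⟩
    · -- minimality
      intro h hdvd hndvd hmem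
      obtain ⟨σ', τ', hσ', hτ', rfl⟩ := dvd_psm_classify σ τ h hdvd
      have hiσ' : ∀ x ∈ σ', x ≠ i := fun x hx h => hiσ (h ▸ hσ' hx)
      have hiτ' : ∀ x ∈ τ', x ≠ i := fun x hx h => hiτ (h ▸ hτ' hx)
      set σ'' := σ'.subtype (· ≠ i) with hσ''def
      set τ'' := τ'.subtype (· ≠ i) with hτ''def
      have himgσ : σ''.image val = σ' := himg hiσ'
      have himgτ : τ''.image val = τ' := himg hiτ'
      have hrn' : rename val (psm σ'' τ'') = psm σ' τ' := by
        rw [rename_psm hval, himgσ, himgτ]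
      have hsub : σ'' ⊆ σ₀ := by
        intro a ha
        have : (a : Fin n) ∈ σ' := Finset.mem_subtype.mp ha
        obtain ⟨b, hb, hba⟩ := Finset.mem_image.mp (hσ' this)
        rwa [show b = a from Subtype.ext hba] at hb
      have htub : τ'' ⊆ τ₀ := by
        intro a ha
        have : (a : Fin n) ∈ τ' := Finset.mem_subtype.mp ha
        obtain ⟨b, hb, hba⟩ := Finset.mem_image.mp (hτ' this)
        rwa [show b = a from Subtype.ext hba] at hb
      have hdvd₀ : psm σ'' τ'' ∣ psm σ₀ τ₀ := psm_dvd_psm hsub htub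
      have hndvd₀ : ¬ psm σ₀ τ₀ ∣ psm σ'' τ'' := by
        intro hgh
        apply hndvd
        have := map_dvd (rename val).toRingHom hgh
        rwa [show (rename val).toRingHom (psm σ₀ τ₀) = psm σ τ from hrn,
          show (rename val).toRingHom (psm σ'' τ'') = psm σ' τ' from hrn'] at this
      apply hgmin _ hdvd₀ hndvd₀
      -- psm σ'' τ'' ∈ neuralIdeal D
      have hd'' : Disjoint σ'' τ'' := by
        rw [Finset.disjoint_left]
        intro a ha ha'
        exact Finset.disjoint_left.mp hd (hσ' (Finset.mem_subtype.mp ha))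
          (hτ' (Finset.mem_subtype.mp ha'))
      apply psm_mem_neuralIdeal hd''
      rintro d ⟨c, hc, rfl⟩
      have : eval c (psm σ' τ') = 0 := eval_eq_zero_of_mem hmem hc
      rw [← hrn', eval_rename] at this
      exact this
    · -- ¬ X i ∣
      intro ⟨q, hq⟩
      have h0 := congrArg (aeval (R := ZMod 2)
        (fun k : Fin n => if k = i then (0 : MvPolynomial (Fin n) (ZMod 2)) else X k)) hq
      rw [subst_psm i 0 hiσ hiτ, map_mul] at h0
      rw [aeval_X, if_pos rfl, zero_mul] at h0
      exact psm_ne_zero hd h0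
    · intro ⟨q, hq⟩
      have h0 := congrArg (aeval (R := ZMod 2)
        (fun k : Fin n => if k = i then (1 : MvPolynomial (Fin n) (ZMod 2)) else X k)) hq
      rw [subst_psm i 1 hiσ hiτ, map_mul, map_sub, map_one] at h0
      rw [aeval_X, if_pos rfl, sub_self, zero_mul] at h0
      exact psm_ne_zero hd h0
  · rintro ⟨⟨⟨σ, τ, hd, rfl⟩, hfI, hfmin⟩, hx, hx'⟩
    have hiσ : i ∉ σ := by
      intro h
      exact hx ((Finset.dvd_prod_of_mem X h).trans (dvd_mul_right _ _))
    have hiτ : i ∉ τ := by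
      intro h
      exact hx' ((Finset.dvd_prod_of_mem (fun j => 1 - X j) h).trans (dvd_mul_left _ _))
    have hiσ' : ∀ x ∈ σ, x ≠ i := fun x hx h => hiσ (h ▸ hx)
    have hiτ' : ∀ x ∈ τ, x ≠ i := fun x hx h => hiτ (h ▸ hx)
    set σ₀ := σ.subtype (· ≠ i) with hσ₀def
    set τ₀ := τ.subtype (· ≠ i) with hτ₀def
    have himgσ : σ₀.image val = σ := himg hiσ'
    have himgτ : τ₀.image val = τ := himg hiτ'
    have hrn : rename val (psm σ₀ τ₀) = psm σ τ := by
      rw [rename_psm hval, himgσ, himgτ]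
    have hd₀ : Disjoint σ₀ τ₀ := by
      rw [Finset.disjoint_left]
      intro a ha ha'
      exact Finset.disjoint_left.mp hd (Finset.mem_subtype.mp ha) (Finset.mem_subtype.mp ha')
    refine ⟨psm σ₀ τ₀, ⟨⟨σ₀, τ₀, hd₀, rfl⟩, ?_, ?_⟩, hrn⟩
    · apply psm_mem_neuralIdeal hd₀
      rintro d ⟨c, hc, rfl⟩
      have : eval c (psm σ τ) = 0 := eval_eq_zero_of_mem hfI hc
      rw [← hrn, eval_rename] at this
      exact this
    · intro h hdvd hndvd hmem
      obtain ⟨σ', τ', hσ', hτ', rfl⟩ := dvd_psm_classify σ₀ τ₀ h hdvd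
      have hrn' : rename val (psm σ' τ') = psm (σ'.image val) (τ'.image val) :=
        rename_psm hval σ' τ'
      have hH : psm (σ'.image val) (τ'.image val) ∣ psm σ τ := by
        rw [← himgσ, ← himgτ]
        exact psm_dvd_psm (Finset.image_subset_image hσ') (Finset.image_subset_image hτ')
      have hnH : ¬ psm σ τ ∣ psm (σ'.image val) (τ'.image val) := by
        intro hfH
        have heq : psm σ τ = psm (σ'.image val) (τ'.image val) := dvd_dvd_eq hfH hH
        have : psm σ₀ τ₀ = psm σ' τ' := by
          apply rename_injective val hval
          rw [hrn, hrn', heq]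
        exact hndvd (this ▸ dvd_refl _)
      apply hfmin _ hH hnH
      have hdI : Disjoint (σ'.image val) (τ'.image val) := by
        apply (Finset.disjoint_image hval).mpr
        rw [Finset.disjoint_left]
        intro a ha ha'
        exact Finset.disjoint_left.mp hd₀ (hσ' ha) (hτ' ha')
      apply psm_mem_neuralIdeal hdI
      intro c hc
      rw [← hrn', eval_rename]
      exact eval_eq_zero_of_mem hmem (hDmem c hc)
end Main
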